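/- For every d > 0 and every ε ≥ (2e^{-1/2} − 1)d, the function r_{d,ε}(t) = ln⁺(d/t) · ((d−t)₊ + ε)^{-2} is monotone decreasing on (0, ∞). -/

import Mathlib

open Real Set

theorem stmt2 (d ε : ℝ) (hd : 0 < d) (hε : (2 * Real.exp (-1/2) - 1) * d ≤ ε) :
    AntitoneOn (fun t : ℝ => max (Real.log (d / t)) 0 * (max (d - t) 0 + ε) ^ (-2 : ℤ))
      (Set.Ioi (0 : ℝ)) := by
  -- ε > 0
  have hε0 : 0 < ε := by
    refine lt_of_lt_of_le ?_ hε
    have h1 : (1:ℝ)/2 < Real.exp (-1/2) := by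
      have := Real.add_one_lt_exp (x := (-1/2 : ℝ)) (by norm_num)
      linarith
    nlinarith
  -- key inequality
  have key : ∀ t ∈ Ioo (0:ℝ) d, 2 * t * Real.log (d / t) ≤ d - t + ε := by
    intro t ht
    have ht0 : 0 < t := ht.1
    have h1 : Real.log (d / t * Real.exp (-1/2)) ≤ d / t * Real.exp (-1/2) - 1 :=
      Real.log_le_sub_one_of_pos (by positivity)
    rw [Real.log_mul (by positivity) (Real.exp_ne_zero _), Real.log_exp] at h1
    have h2 : Real.log (d / t) ≤ d / t * Real.exp (-1/2) - 1/2 := by linarith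
    have h3 : 2 * t * Real.log (d / t) ≤ 2 * d * Real.exp (-1/2) - t := by
      have := mul_le_mul_of_nonneg_left h2 (le_of_lt (by positivity : (0:ℝ) < 2 * t))
      have hdt : 2 * t * (d / t * Real.exp (-1/2)) = 2 * d * Real.exp (-1/2) := by
        field_simp
      nlinarith
    nlinarith
  -- derivative of the smooth version on Ioo 0 d
  set g : ℝ → ℝ := fun t => Real.log (d / t) / (d - t + ε) ^ 2 with hg
  have hderiv : ∀ t ∈ Ioo (0:ℝ) d, HasDerivAt g
      ((-t⁻¹ * (d - t + ε) ^ 2 - Real.log (d / t) * (2 * (d - t + ε) * (-1))) /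
        ((d - t + ε) ^ 2) ^ 2) t := by
    intro t ht
    have ht0 : 0 < t := ht.1
    have hA : 0 < d - t + ε := by have := ht.2; linarith
    have hu : HasDerivAt (fun t : ℝ => Real.log (d / t)) (-t⁻¹) t := by
      have h1 : HasDerivAt (fun t : ℝ => d / t) (d * -(t ^ 2)⁻¹) t := by
        simpa [div_eq_mul_inv] using (hasDerivAt_inv ht0.ne').const_mul d
      have := h1.log (by positivity)
      convert this using 1
      field_simp
    have hv : HasDerivAt (fun t : ℝ => (d - t + ε) ^ 2) (2 * (d - t + ε) * (-1)) t := by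
      have h1 : HasDerivAt (fun t : ℝ => d - t + ε) (-1) t := by
        simpa using ((hasDerivAt_const t d).sub (hasDerivAt_id t)).add_const ε
      have := h1.fun_pow 2
      refine this.congr_deriv ?_
      ring
    exact hu.div hv (by positivity)
  have hanti : AntitoneOn g (Ioo (0:ℝ) d) := by
    have hint : interior (Ioo (0:ℝ) d) = Ioo 0 d := interior_Ioo
    refine antitoneOn_of_hasDerivWithinAt_nonpos (f' := fun t => (-t⁻¹ * (d - t + ε) ^ 2 - Real.log (d / t) * (2 * (d - t + ε) * (-1))) / ((d - t + ε) ^ 2) ^ 2) (convex_Ioo 0 d) ?_ ?_ ?_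
    · intro t ht
      exact ((hderiv t ht).continuousAt).continuousWithinAt
    · intro t ht
      rw [hint] at ht ⊢
      exact ((hderiv t ht).hasDerivWithinAt)
    · intro t ht
      rw [hint] at ht
      have ht0 : 0 < t := ht.1
      have hA : 0 < d - t + ε := by have := ht.2; linarith
      have hlog : 0 ≤ Real.log (d / t) := Real.log_nonneg (by
        rw [le_div_iff₀ ht0]; linarith [ht.2])
      have hnum : -t⁻¹ * (d - t + ε) ^ 2 - Real.log (d / t) * (2 * (d - t + ε) * (-1)) ≤ 0 := by
        have hk := key t ht
        have h1 : 2 * t * Real.log (d / t) * (d - t + ε) ≤ (d - t + ε) * (d - t + ε) :=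
          mul_le_mul_of_nonneg_right hk hA.le
        have ht' : t⁻¹ * t = 1 := inv_mul_cancel₀ ht0.ne'
        nlinarith [mul_pos ht0 (mul_pos hA hA), inv_pos.mpr ht0]
      exact div_nonpos_iff.mpr (Or.inr ⟨hnum, by positivity⟩)
  -- the original function equals g on Ioo 0 d, and is 0 for t ≥ d
  intro x hx y hy hxy
  simp only [mem_Ioi] at hx hy
  have hfnonneg : ∀ t : ℝ, 0 ≤ max (Real.log (d / t)) 0 * (max (d - t) 0 + ε) ^ (-2 : ℤ) := by
    intro t
    apply mul_nonneg (le_max_right _ _)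
    rw [zpow_neg]
    positivity
  by_cases hyd : y < d
  · have hxd : x < d := lt_of_le_of_lt hxy hyd
    have heq : ∀ t ∈ Ioo (0:ℝ) d,
        max (Real.log (d / t)) 0 * (max (d - t) 0 + ε) ^ (-2 : ℤ) = g t := by
      intro t ht
      have ht0 : 0 < t := ht.1
      have hA : 0 < d - t + ε := by have := ht.2; linarith
      have hlog : 0 ≤ Real.log (d / t) := Real.log_nonneg (by
        rw [le_div_iff₀ ht0]; linarith [ht.2])
      rw [max_eq_left hlog, max_eq_left (by linarith [ht.2] : (0:ℝ) ≤ d - t)]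
      rw [hg]
      simp only [zpow_neg, div_eq_mul_inv]
      norm_cast
    simp only [heq x ⟨hx, hxd⟩, heq y ⟨hy, hyd⟩]
    exact hanti ⟨hx, hxd⟩ ⟨hy, hyd⟩ hxy
  · push_neg at hyd
    have : max (Real.log (d / y)) 0 = 0 := by
      apply max_eq_right
      apply Real.log_nonpos (by positivity)
      rw [div_le_one hy]; exact hyd
    simp only [this, zero_mul]
    exact hfnonneg x
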